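/- In Ban, let S consist of the isometries between separable Banach spaces. Then every morphism f ∈ Po(S) is a pushout of some isometry s between separable Banach spaces along an isometry u; that is, there is a pushout square with left vertical arrow s ∈ S, bottom-left vertex mapped into the domain of f by an isometry u, and f as the induced cobase change. -/

import Mathlib

universe v u

open CategoryTheory CategoryTheory.Limits

namespace Paper

variable {K : Type u} [Category.{v} K]

/-- A preorder is `κ`-directed if every subset of cardinality `< κ` has an upper bound. -/
def IsCardinalDirected (P : Type v) [Preorder P] (κ : Cardinal.{v}) : Prop :=
  ∀ S : Set P, Cardinal.mk S < κ → ∃ x : P, ∀ y ∈ S, y ≤ x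

/-- An object `A` is `κ`-presentable: its hom-functor preserves `κ`-directed colimits. -/
def IsPresentable (κ : Cardinal.{v}) (A : K) : Prop :=
  ∀ (P : Type v) [Preorder P], IsCardinalDirected P κ →
    ∀ (D : P ⥤ K) (c : Cocone D), IsColimit c →
      (∀ h : A ⟶ c.pt, ∃ (x : P) (g : A ⟶ D.obj x), g ≫ c.ι.app x = h) ∧
      (∀ (x : P) (g g' : A ⟶ D.obj x), g ≫ c.ι.app x = g' ≫ c.ι.app x →
        ∃ (y : P) (hxy : x ≤ y), g ≫ D.map (homOfLE hxy) = g' ≫ D.map (homOfLE hxy))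

/-- `K` is a locally `λ`-presentable category: it is cocomplete and there is a set of
`λ`-presentable objects such that every object is a `λ`-directed colimit of objects
from this set. -/
def IsLocallyPresentable (K : Type u) [Category.{v} K] (lam : Cardinal.{v}) : Prop :=
  HasColimitsOfSize.{v, v} K ∧
  ∃ (ι : Type v) (G : ι → K), (∀ i, IsPresentable lam (G i)) ∧
    ∀ X : K, ∃ (P : Type v) (ip : Preorder P),
      letI := ip
      IsCardinalDirected P lam ∧
      ∃ (D : P ⥤ K), (∀ p : P, ∃ i : ι, Nonempty (D.obj p ≅ G i)) ∧
        ∃ (c : Cocone D), Nonempty (IsColimit c) ∧ Nonempty (c.pt ≅ X)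

/-- There is a representative set of `λ`-presentable objects of cardinality at most `κ`. -/
def PresentablesCardLE (K : Type u) [Category.{v} K] (lam κ : Cardinal.{v}) : Prop :=
  ∃ (ι : Type v) (G : ι → K), Cardinal.mk ι ≤ κ ∧
    ∀ X : K, IsPresentable lam X → ∃ i : ι, Nonempty (X ≅ G i)

/-- `Po X`: the class of all pushouts (cobase changes) of morphisms from `X`. -/
def Po (X : MorphismProperty K) : MorphismProperty K :=
  fun _ _ f => ∃ (C D : K) (u : C ⟶ _) (s : C ⟶ D) (v : D ⟶ _),
    X s ∧ IsPushout u s f v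

/-- `Po_λ X`: pushouts of morphisms from `X` with `λ`-presentable domain and codomain. -/
def PoPres (lam : Cardinal.{v}) (X : MorphismProperty K) : MorphismProperty K :=
  fun _ _ f => ∃ (C D : K) (u : C ⟶ _) (s : C ⟶ D) (v : D ⟶ _),
    X s ∧ IsPresentable lam C ∧ IsPresentable lam D ∧ IsPushout u s f v

/-- Ordinals `≤ γ`, the shape of a transfinite chain of length `γ`. -/
abbrev ChainIndex (γ : Ordinal.{v}) := {i : Ordinal.{v} // i ≤ γ}

def chainBot (γ : Ordinal.{v}) : ChainIndex γ := ⟨0, (zero_le : 0 ≤ γ)⟩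

def chainTop (γ : Ordinal.{v}) : ChainIndex γ := ⟨γ, le_refl γ⟩

/-- The canonical cocone with apex `D x` on the restriction of `D` to a subset `Q`
of elements `≤ x`. -/
@[simps]
def subCocone {P : Type*} [Preorder P] (D : P ⥤ K) (Q : Set P) (x : P)
    (hx : ∀ q : Q, (q : P) ≤ x) :
    Cocone ((Subtype.mono_coe (· ∈ Q)).functor ⋙ D) where
  pt := D.obj x
  ι :=
    { app := fun q => D.map (homOfLE (hx q))
      naturality := fun q q' h => by
        simp only [Functor.const_obj_map, Functor.comp_map, ← D.map_comp]
        exact (Category.comp_id _).symm }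

/-- A chain `F : ChainIndex γ ⥤ K` is smooth if at every limit ordinal `j ≤ γ` the
canonical cocone of the restriction to `{i | i < j}` is a colimit cocone. -/
def IsSmoothChain {γ : Ordinal.{v}} (F : ChainIndex γ ⥤ K) : Prop :=
  ∀ j : ChainIndex γ, Order.IsSuccLimit j.1 →
    Nonempty (IsColimit (subCocone F (Set.Iio j) j (fun q => le_of_lt q.2)))

/-- `f` is a transfinite composition of length `γ` of morphisms from `X`: the composite
of a smooth chain of length `γ` all of whose successor steps lie in `X`. -/
def IsTransfiniteCompositionOfLength (X : MorphismProperty K) (γ : Ordinal.{v})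
    {A B : K} (f : A ⟶ B) : Prop :=
  ∃ F : ChainIndex γ ⥤ K, IsSmoothChain F ∧
    (∀ (i : ChainIndex γ) (hi : i.1 < γ),
      X (F.map (homOfLE (show i ≤ ⟨Order.succ i.1, Order.succ_le_of_lt hi⟩ from
        Order.le_succ i.1)))) ∧
    ∃ (e₀ : F.obj (chainBot γ) ≅ A) (e₁ : F.obj (chainTop γ) ≅ B),
      e₀.inv ≫ F.map (homOfLE (show chainBot γ ≤ chainTop γ from (zero_le : 0 ≤ γ))) ≫
        e₁.hom = f

/-- `Tc X`: the class of transfinite compositions of morphisms from `X`. -/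
def Tc (X : MorphismProperty K) : MorphismProperty K :=
  fun _ _ f => ∃ γ : Ordinal.{v}, IsTransfiniteCompositionOfLength X γ f

/-- `κ`-`Tc X`: transfinite compositions of length `< κ`. -/
def TcLT (κ : Cardinal.{v}) (X : MorphismProperty K) : MorphismProperty K :=
  fun _ _ f => ∃ γ : Ordinal.{v}, γ < κ.ord ∧ IsTransfiniteCompositionOfLength X γ f

/-- `cell X = Tc (Po X)`: the class of `X`-cellular morphisms. -/
def Cell (X : MorphismProperty K) : MorphismProperty K := Tc (Po X)

/-- The morphisms with the right lifting property w.r.t. every morphism of `X`. -/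
def Rlp (X : MorphismProperty K) : MorphismProperty K :=
  fun _ _ g => ∀ ⦃A B : K⦄ (f : A ⟶ B), X f → HasLiftingProperty f g

/-- The morphisms with the left lifting property w.r.t. every morphism of `X`. -/
def Llp (X : MorphismProperty K) : MorphismProperty K :=
  fun _ _ f => ∀ ⦃A B : K⦄ (g : A ⟶ B), X g → HasLiftingProperty f g

/-- `cof X`: retracts of `X`-cellular morphisms in comma categories `K\𝒦`,
i.e. retracts in the under-category of the common domain. -/
def Cof (X : MorphismProperty K) : MorphismProperty K :=
  fun _ _ f => ∃ (C : K) (g : _ ⟶ C), Cell X g ∧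
    ∃ (i : _ ⟶ C) (r : C ⟶ _), f ≫ i = g ∧ g ≫ r = f ∧ i ≫ r = 𝟙 _

/-- A (proper) factorization system `(E, M)`: `E` consists of epimorphisms, `M` of
monomorphisms, `M = E^□`, `E = ^□M` and every morphism factors as `m ∘ e`. -/
structure IsFactorizationSystem (E M : MorphismProperty K) : Prop where
  epi : ∀ ⦃A B : K⦄ (f : A ⟶ B), E f → Epi f
  mono : ∀ ⦃A B : K⦄ (f : A ⟶ B), M f → Mono f
  rlp : M = Rlp E
  llp : E = Llp M
  factor : ∀ ⦃A B : K⦄ (f : A ⟶ B), ∃ (C : K) (e : A ⟶ C) (m : C ⟶ B),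
    E e ∧ M m ∧ e ≫ m = f

/-- `M` is special: it is the right class of a factorization system and `cell M = M`. -/
def IsSpecial (M : MorphismProperty K) : Prop :=
  (∃ E : MorphismProperty K, IsFactorizationSystem E M) ∧ Cell M = M

/-- `S ⊆ M` is `λ`-special: (S1) `S ⊆ M_λ`; (S2) `S` contains all isomorphisms between
`λ`-presentable objects; (S3) `λ`-`Tc (Po_λ S) = S`; (S4) the cancellation property. -/
structure IsLambdaSpecial (lam : Cardinal.{v}) (M S : MorphismProperty K) : Prop where
  le : ∀ ⦃A B : K⦄ (f : A ⟶ B), S f → M f ∧ IsPresentable lam A ∧ IsPresentable lam B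
  iso : ∀ ⦃A B : K⦄ (f : A ⟶ B), IsIso f →
    IsPresentable lam A → IsPresentable lam B → S f
  tc : TcLT lam (PoPres lam S) = S
  cancel : ∀ ⦃A B C : K⦄ (f : A ⟶ B) (g : B ⟶ C),
    Po S (f ≫ g) → Po S f → M g → Po S g

/-- `(M, S)` is a `λ`-special pair. -/
def IsSpecialPair (lam : Cardinal.{v}) (M S : MorphismProperty K) : Prop :=
  IsSpecial M ∧ IsLambdaSpecial lam M S

/-- `X` is `(S,M,κ)`-injective: every `M`-morphism `A → X` with `A` `κ`-presentable
extends along every `Po S`-morphism `A → B` via an `M`-morphism `B → X`. -/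
def IsSMInjective (S M : MorphismProperty K) (κ : Cardinal.{v}) (X : K) : Prop :=
  ∀ ⦃A B : K⦄ (f : A ⟶ B), Po S f → IsPresentable κ A →
    ∀ g : A ⟶ X, M g → ∃ h : B ⟶ X, M h ∧ f ≫ h = g

/-- `X` is an `S`-cellular object: the unique morphism from the initial object is
`S`-cellular. -/
def IsCellularObject (S : MorphismProperty K) (X : K) : Prop :=
  ∃ (O : K) (_ : IsInitial O) (f : O ⟶ X), Cell S f

/-- `X` has size `κ`: its presentability rank is the successor `κ⁺`. -/
def HasSize (κ : Cardinal.{v}) (X : K) : Prop :=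
  IsPresentable (Order.succ κ) X ∧
  ∀ μ : Cardinal.{v}, μ.IsRegular → μ < Order.succ κ → ¬ IsPresentable μ X

/-- `M` is closed under directed colimits (in the arrow category). -/
def ClosedUnderDirectedColimits (M : MorphismProperty K) : Prop :=
  ∀ (P : Type v) (ip : Preorder P),
    letI := ip
    ∀ (_ : IsDirected P (· ≤ ·)) (D₁ D₂ : P ⥤ K) (η : D₁ ⟶ D₂)
      (c₁ : Cocone D₁) (c₂ : Cocone D₂) (h₁ : IsColimit c₁) (_ : IsColimit c₂),
      (∀ p : P, M (η.app p)) →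
      M (h₁.desc (Cocone.mk c₂.pt (η ≫ c₂.ι)))

/-- The class of regular monomorphisms of `K`. -/
def regularMonos (K : Type u) [Category.{v} K] : MorphismProperty K :=
  fun _ _ f => Nonempty (RegularMono f)

/-- `K` is coregular: finitely cocomplete, with equalizers of cokernel pairs, and
regular monomorphisms are stable under pushouts. -/
structure IsCoregular (K : Type u) [Category.{v} K] : Prop where
  hasFiniteColimits : HasFiniteColimits K
  hasEqualizersOfCokernelPairs : ∀ ⦃A B : K⦄ (f : A ⟶ B) (P : K) (i₁ i₂ : B ⟶ P),
    IsPushout f f i₁ i₂ → HasEqualizer i₁ i₂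
  pushoutStable : ∀ ⦃A B C D : K⦄ (f : A ⟶ B) (u : A ⟶ C) (g : C ⟶ D) (v : B ⟶ D),
    IsPushout u f g v → Nonempty (RegularMono f) → Nonempty (RegularMono g)

section GoodDiagrams

variable {P : Type v} [PartialOrder P]

/-- A good poset: well-founded with a least element. -/
def IsGoodPoset (P : Type v) [PartialOrder P] : Prop :=
  WellFoundedLT P ∧ ∃ b : P, ∀ x : P, b ≤ x

/-- A `κ`-good poset: good, and every initial segment `↓x` has cardinality `< κ`. -/
def IsKappaGoodPoset (P : Type v) [PartialOrder P] (κ : Cardinal.{v}) : Prop :=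
  IsGoodPoset P ∧ ∀ x : P, Cardinal.mk (Set.Iic x) < κ

/-- `x` is isolated: `{y | y < x}` has a top element (the predecessor of `x`). -/
def IsIsolatedElem (x : P) : Prop := ∃ y : P, y < x ∧ ∀ z : P, z < x → z ≤ y

/-- A diagram over a good poset is smooth: at every limit element `x` (neither least
nor isolated) the canonical cocone on the restriction to `{y | y < x}` is a colimit. -/
def IsSmoothGoodDiagram (D : P ⥤ K) : Prop :=
  ∀ x : P, ¬ (∀ y : P, x ≤ y) → ¬ IsIsolatedElem x →
    Nonempty (IsColimit (subCocone D (Set.Iio x) x (fun q => le_of_lt q.2)))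

/-- The links of `D` (the morphisms `D (x⁻ → x)` for isolated `x`) lie in `X`. -/
def HasLinksIn (D : P ⥤ K) (X : MorphismProperty K) : Prop :=
  ∀ (x y : P) (h : y < x), (∀ z : P, z < x → z ≤ y) → X (D.map (homOfLE h.le))

/-- For every subset `Q` of cardinality `< κ` the colimit of the restriction of `D`
to `Q` is realized as some `D x`, via the morphisms of `D`. -/
def SmallSubcolimitsRealized (D : P ⥤ K) (κ : Cardinal.{v}) : Prop :=
  ∀ Q : Set P, Cardinal.mk Q < κ →
    ∃ (x : P) (hx : ∀ q : Q, (q : P) ≤ x), Nonempty (IsColimit (subCocone D Q x hx))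

end GoodDiagrams

end Paper

open CategoryTheory CategoryTheory.Limits Paper

/-- The category `Ban` of Banach spaces (over `ℝ`) with linear operators of norm at
most `1` as morphisms. -/
structure Ban : Type 1 where
  carrier : Type
  [isNormedAddCommGroup : NormedAddCommGroup carrier]
  [isNormedSpace : NormedSpace ℝ carrier]
  [isCompleteSpace : CompleteSpace carrier]

attribute [instance] Ban.isNormedAddCommGroup Ban.isNormedSpace Ban.isCompleteSpace

instance : CoeSort Ban Type := ⟨Ban.carrier⟩

instance : Category.{0} Ban where
  Hom X Y := { f : X →L[ℝ] Y // ‖f‖ ≤ 1 }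
  id X := ⟨ContinuousLinearMap.id ℝ X, ContinuousLinearMap.norm_id_le⟩
  comp {X Y Z} f g := ⟨g.1.comp f.1,
    le_trans (ContinuousLinearMap.opNorm_comp_le g.1 f.1)
      (by nlinarith [g.2, f.2, norm_nonneg f.1, norm_nonneg g.1])⟩
  id_comp f := Subtype.ext (by ext x; rfl)
  comp_id f := Subtype.ext (by ext x; rfl)
  assoc f g h := Subtype.ext (by ext x; rfl)

/-- The class of isometries in `Ban`. -/
def banIsometries : MorphismProperty Ban := fun _ _ f => Isometry f.1

/-- The density character of a topological space: the least cardinality of a dense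
subset. -/
noncomputable def densityCharacter (X : Type) [TopologicalSpace X] : Cardinal.{0} :=
  ⨅ s : { s : Set X // Dense s }, Cardinal.mk ↥(s : Set X)

/-- The class of isometries between separable Banach spaces. -/
def banSepIsometries : MorphismProperty Ban := fun A B f =>
  Isometry f.1 ∧ TopologicalSpace.SeparableSpace ↥A ∧ TopologicalSpace.SeparableSpace ↥B

/-- The class `M_λ` of isometries between `λ`-presentable Banach spaces. -/
def banIsometriesPres (lam : Cardinal.{0}) : MorphismProperty Ban := fun A B f =>
  Isometry f.1 ∧ IsPresentable lam A ∧ IsPresentable lam B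

lemma ban_norm_app_le {X Y : Ban} (g : X ⟶ Y) (x : X) : ‖g.1 x‖ ≤ ‖x‖ := by
  simpa using g.1.le_of_opNorm_le g.2 x

lemma ban_comp_apply {X Y Z : Ban} (g : X ⟶ Y) (h : Y ⟶ Z) (x : X) :
    (g ≫ h).1 x = h.1 (g.1 x) := rfl

/-- In `Ban`, a cobase change of an isometry is norm-preserving. -/
lemma ban_pushout_isometry {C D A B : Ban} (u : C ⟶ A) (s : C ⟶ D) (f : A ⟶ B) (v : D ⟶ B)
    (hs : Isometry s.1) (hp : IsPushout u s f v) (x : A) : ‖f.1 x‖ = ‖x‖ := by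
  refine le_antisymm (ban_norm_app_le f x) ?_
  rcases eq_or_ne x 0 with rfl | hx
  · simp
  obtain ⟨φ, hφ1, hφx⟩ := exists_dual_vector ℝ x (norm_ne_zero_iff.mpr hx)
  -- build the functional on D extending φ ∘ u along s
  have hsinj : Function.Injective s.1.toLinearMap := hs.injective
  set p : Submodule ℝ D := LinearMap.range s.1.toLinearMap with hp_def
  let e : C ≃ₗ[ℝ] p := LinearEquiv.ofInjective s.1.toLinearMap hsinj
  let ψ₀ : p →ₗ[ℝ] ℝ :=
    ((φ.comp u.1).toLinearMap).comp e.symm.toLinearMap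
  have hψ₀ : ∀ y : p, ‖ψ₀ y‖ ≤ 1 * ‖y‖ := by
    intro y
    have hy : (y : D) = s.1 (e.symm y) := by
      conv_lhs => rw [← e.apply_symm_apply y]
      rfl
    have h1 : ψ₀ y = φ (u.1 (e.symm y)) := rfl
    rw [h1, one_mul]
    calc ‖φ (u.1 (e.symm y))‖ ≤ ‖u.1 (e.symm y)‖ := by
          simpa [hφ1] using φ.le_opNorm (u.1 (e.symm y))
      _ ≤ ‖(e.symm y : C)‖ := ban_norm_app_le u _
      _ = ‖s.1 (e.symm y)‖ := (hs.norm_map_of_map_zero (map_zero _) _).symm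
      _ = ‖y‖ := by rw [← hy]; rfl
  let ψ : p →L[ℝ] ℝ := LinearMap.mkContinuous ψ₀ 1 hψ₀
  obtain ⟨g, hg_ext, hg_norm⟩ := exists_extension_norm_eq p ψ
  have hgle : ‖g‖ ≤ 1 := by
    rw [hg_norm]; exact LinearMap.mkContinuous_norm_le ψ₀ zero_le_one hψ₀
  let R : Ban := Ban.mk ℝ
  let φm : A ⟶ R := ⟨φ, le_of_eq hφ1⟩
  let gm : D ⟶ R := ⟨g, hgle⟩
  have hcomm : u ≫ φm = s ≫ gm := by
    apply Subtype.ext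
    ext c
    have h1 : gm.1 (s.1 c) = ψ ⟨s.1 c, LinearMap.mem_range_self _ c⟩ :=
      hg_ext ⟨s.1 c, LinearMap.mem_range_self _ c⟩
    have h2 : e.symm ⟨s.1 c, LinearMap.mem_range_self _ c⟩ = c := by
      apply hsinj
      have := e.apply_symm_apply ⟨s.1 c, LinearMap.mem_range_self _ c⟩
      exact congrArg Subtype.val this
    show φ (u.1 c) = g (s.1 c)
    rw [h1]
    show φ (u.1 c) = ψ₀ ⟨s.1 c, _⟩
    show φ (u.1 c) = φ (u.1 (e.symm ⟨s.1 c, _⟩))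
    rw [h2]
  let t : B ⟶ R := hp.desc φm gm hcomm
  have hft : f ≫ t = φm := hp.inl_desc φm gm hcomm
  have : t.1 (f.1 x) = φ x :=
    congrFun (congrArg (fun (h : A ⟶ R) => (⇑h.1 : A → ℝ)) hft) x
  calc ‖x‖ = φ x := by exact_mod_cast hφx.symm
    _ = t.1 (f.1 x) := this.symm
    _ ≤ ‖t.1 (f.1 x)‖ := le_abs_self _
    _ ≤ ‖f.1 x‖ := ban_norm_app_le t _


lemma ban_hom_app_eq {X Y : Ban} {g h : X ⟶ Y} (e : g = h) (x : X) : g.1 x = h.1 x := by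
  rw [e]

/-- in `Ban`, every pushout of an isometry between separable Banach
spaces is a pushout of an isometry between separable Banach spaces along an isometry. -/
theorem ban_po_along_isometry
    {A B : Ban} (f : A ⟶ B) (hf : Po banSepIsometries f) :
    ∃ (C D : Ban) (u : C ⟶ A) (s : C ⟶ D) (v : D ⟶ B),
      banSepIsometries s ∧ Isometry u.1 ∧ IsPushout u s f v := by
  obtain ⟨C, D, u, s, v, ⟨hs_iso, hsepC, hsepD⟩, hp⟩ := hf
  haveI := hsepC; haveI := hsepD
  have hf_norm : ∀ x : A, ‖f.1 x‖ = ‖x‖ := ban_pushout_isometry u s f v hs_iso hp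
  have hw : ∀ c : C, f.1 (u.1 c) = v.1 (s.1 c) := fun c => ban_hom_app_eq hp.w c
  -- the closure of the range of `u`
  set Csub : Submodule ℝ A.carrier := (LinearMap.range u.1.toLinearMap).topologicalClosure
    with hCsub
  haveI : CompleteSpace ↥Csub :=
    ((LinearMap.range u.1.toLinearMap).isClosed_topologicalClosure).completeSpace_coe
  haveI hsepC' : TopologicalSpace.SeparableSpace ↥Csub := by
    refine TopologicalSpace.IsSeparable.separableSpace ?_
    rw [hCsub, Submodule.topologicalClosure_coe, LinearMap.coe_range]
    exact (TopologicalSpace.isSeparable_range u.1.continuous).closure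
  -- the closure of the range of `v`
  set Qsub : Submodule ℝ B.carrier := (LinearMap.range v.1.toLinearMap).topologicalClosure
    with hQsub
  haveI : CompleteSpace ↥Qsub :=
    ((LinearMap.range v.1.toLinearMap).isClosed_topologicalClosure).completeSpace_coe
  haveI hsepQ : TopologicalSpace.SeparableSpace ↥Qsub := by
    refine TopologicalSpace.IsSeparable.separableSpace ?_
    rw [hQsub, Submodule.topologicalClosure_coe, LinearMap.coe_range]
    exact (TopologicalSpace.isSeparable_range v.1.continuous).closure
  let C' : Ban := Ban.mk ↥Csub
  let Q : Ban := Ban.mk ↥Qsub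
  let m : C' ⟶ A := ⟨Csub.subtypeL, Csub.norm_subtypeL_le⟩
  have hm_isom : Isometry m.1 := isometry_subtype_coe
  have hmemQ : ∀ x : ↥Csub, f.1 (Csub.subtypeL x) ∈ Qsub := by
    intro x
    have hx : (x : A.carrier) ∈ closure (Set.range ⇑u.1) := by
      have h2 : (x : A.carrier) ∈
          ((LinearMap.range u.1.toLinearMap).topologicalClosure : Set A.carrier) := x.2
      rw [Submodule.topologicalClosure_coe, LinearMap.coe_range] at h2
      exact h2
    have h3 : f.1 (x : A.carrier) ∈ closure (⇑f.1 '' Set.range ⇑u.1) :=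
      image_closure_subset_closure_image f.1.continuous ⟨(x : A.carrier), hx, rfl⟩
    have h4 : (⇑f.1 '' Set.range ⇑u.1) ⊆ Set.range ⇑v.1 := by
      rintro y ⟨-, ⟨c, rfl⟩, rfl⟩
      exact ⟨s.1 c, (hw c).symm⟩
    have h5 : f.1 (x : A.carrier) ∈ closure (Set.range ⇑v.1) := closure_mono h4 h3
    show f.1 (x : A.carrier) ∈ Qsub
    rw [hQsub, ← SetLike.mem_coe, Submodule.topologicalClosure_coe, LinearMap.coe_range]
    exact h5
  have hs'_norm : ∀ x : ↥Csub,
      ‖(f.1.comp Csub.subtypeL).codRestrict Qsub hmemQ x‖ = ‖x‖ := by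
    intro x
    show ‖f.1 (x : A.carrier)‖ = ‖x‖
    rw [hf_norm]
    rfl
  let s' : C' ⟶ Q := ⟨(f.1.comp Csub.subtypeL).codRestrict Qsub hmemQ,
    ContinuousLinearMap.opNorm_le_bound _ zero_le_one fun x => by
      rw [hs'_norm x, one_mul]⟩
  have hs'_isom : Isometry s'.1 := AddMonoidHomClass.isometry_of_norm s'.1 hs'_norm
  let v' : Q ⟶ B := ⟨Qsub.subtypeL, Qsub.norm_subtypeL_le⟩
  have hmemv : ∀ d : D.carrier, v.1 d ∈ Qsub := fun d =>
    Submodule.le_topologicalClosure _ (LinearMap.mem_range_self v.1.toLinearMap d)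
  let vt : D ⟶ Q := ⟨v.1.codRestrict Qsub hmemv,
    ContinuousLinearMap.opNorm_le_bound _ zero_le_one fun d => by
      rw [one_mul]
      show ‖v.1 d‖ ≤ ‖d‖
      exact ban_norm_app_le v d⟩
  have hvt : vt ≫ v' = v := Subtype.ext (by ext d; rfl)
  have hdense : DenseRange (⇑vt.1 : D.carrier → ↥Qsub) := by
    intro q
    rw [closure_subtype]
    have himg : Subtype.val '' Set.range (⇑vt.1 : D.carrier → ↥Qsub) = Set.range ⇑v.1 := by
      ext y
      constructor
      · rintro ⟨-, ⟨d, rfl⟩, rfl⟩; exact ⟨d, rfl⟩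
      · rintro ⟨d, rfl⟩; exact ⟨vt.1 d, ⟨d, rfl⟩, rfl⟩
    rw [himg]
    have h2 : (q : B.carrier) ∈
        ((LinearMap.range v.1.toLinearMap).topologicalClosure : Set B.carrier) := q.2
    rw [Submodule.topologicalClosure_coe, LinearMap.coe_range] at h2
    exact h2
  have hcomm : m ≫ f = s' ≫ v' := Subtype.ext (by ext x; rfl)
  have hmemc : ∀ cc : C.carrier, u.1 cc ∈ Csub := fun cc =>
    Submodule.le_topologicalClosure _ (LinearMap.mem_range_self u.1.toLinearMap cc)
  have hdesc_comm : ∀ (T : Ban) (a : A ⟶ T) (b : Q ⟶ T), m ≫ a = s' ≫ b →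
      u ≫ a = s ≫ (vt ≫ b) := by
    intro T a b hab
    apply Subtype.ext
    ext cc
    have h1 : a.1 (m.1 ⟨u.1 cc, hmemc cc⟩) = b.1 (s'.1 ⟨u.1 cc, hmemc cc⟩) :=
      ban_hom_app_eq hab ⟨u.1 cc, hmemc cc⟩
    have h2 : vt.1 (s.1 cc) = s'.1 ⟨u.1 cc, hmemc cc⟩ := Subtype.ext (hw cc).symm
    show a.1 (u.1 cc) = b.1 (vt.1 (s.1 cc))
    rw [h2]
    exact h1
  refine ⟨C', Q, m, s', v', ⟨hs'_isom, hsepC', hsepQ⟩, hm_isom, ?_⟩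
  refine IsPushout.of_isColimit' (CommSq.mk hcomm) ?_
  refine PushoutCocone.IsColimit.mk hcomm
    (fun c => hp.desc c.inl (vt ≫ c.inr) (hdesc_comm _ c.inl c.inr c.condition))
    (fun c => hp.inl_desc _ _ _) ?_ ?_
  · intro c
    set t := hp.desc c.inl (vt ≫ c.inr) (hdesc_comm _ c.inl c.inr c.condition) with ht
    have hvd : v ≫ t = vt ≫ c.inr := hp.inr_desc _ _ _
    have hfun : (⇑((v' ≫ t).1) : ↥Qsub → c.pt.carrier) = ⇑(c.inr.1) := by
      refine hdense.equalizer (v' ≫ t).1.continuous c.inr.1.continuous (funext fun d => ?_)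
      show (v' ≫ t).1 (vt.1 d) = c.inr.1 (vt.1 d)
      have h1 : (v' ≫ t).1 (vt.1 d) = (v ≫ t).1 d := rfl
      rw [h1, hvd]
      rfl
    exact Subtype.ext (ContinuousLinearMap.ext fun q => congrFun hfun q)
  · intro c mm h1 h2
    apply hp.hom_ext
    · rw [hp.inl_desc]; exact h1
    · rw [hp.inr_desc]
      calc v ≫ mm = vt ≫ (v' ≫ mm) := by rw [← Category.assoc, hvt]
        _ = vt ≫ c.inr := by rw [h2]
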